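/- Let G be a ternary semigroup, X a real Banach space, and φ : G × G × G → [0,∞) a function such that for all x, y, z ∈ G the series φ̃(x,y,z) := (1/3)·∑_{n=0}^∞ 3^{-n} φ(x^{3^n}, y^{3^n}, z^{3^n}) converges. Suppose f : G → X satisfies ‖f([xyz]) − f(x) − f(y) − f(z)‖ ≤ φ(x,y,z) for all x, y, z ∈ G. Then there exists a mapping T : G → X such that T(x³) = 3·T(x) and ‖f(x) − T(x)‖ ≤ φ̃(x,x,x) for all x ∈ G. -/
import Mathlib


/-- Iterated cube: `cubeIter op x n = x^{3^n}` where `x³ = op x x x`. -/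
def cubeIter {G : Type*} (op : G → G → G → G) (x : G) : ℕ → G
  | 0 => x
  | n + 1 => op (cubeIter op x n) (cubeIter op x n) (cubeIter op x n)

lemma cubeIter_cube {G : Type*} (op : G → G → G → G) (x : G) (n : ℕ) :
    cubeIter op (op x x x) n = cubeIter op x (n + 1) := by
  induction n with
  | zero => rfl
  | succ n ih => simp [cubeIter, ih]

theorem stmt_0 {G : Type*} (op : G → G → G → G)
    (assoc : ∀ x y z u v : G,
      op (op x y z) u v = op x (op y z u) v ∧
      op x (op y z u) v = op x y (op z u v))
    {X : Type*} [NormedAddCommGroup X] [NormedSpace ℝ X] [CompleteSpace X]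
    (φ : G → G → G → ℝ) (hφ : ∀ x y z, 0 ≤ φ x y z)
    (hconv : ∀ x y z : G, Summable (fun n : ℕ =>
      ((1 : ℝ) / 3) ^ n * φ (cubeIter op x n) (cubeIter op y n) (cubeIter op z n)))
    (f : G → X)
    (hf : ∀ x y z : G, ‖f (op x y z) - f x - f y - f z‖ ≤ φ x y z) :
    ∃ T : G → X, (∀ x : G, T (op x x x) = (3 : ℝ) • T x) ∧
      ∀ x : G, ‖f x - T x‖ ≤
        (1 / 3) * ∑' n : ℕ,
          ((1 : ℝ) / 3) ^ n * φ (cubeIter op x n) (cubeIter op x n) (cubeIter op x n) := by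
  classical
  set g : G → ℕ → X := fun x n => ((1 : ℝ) / 3) ^ n • f (cubeIter op x n) with hg
  set d : G → ℕ → ℝ := fun x n =>
    (1 / 3) * (((1 : ℝ) / 3) ^ n * φ (cubeIter op x n) (cubeIter op x n) (cubeIter op x n))
    with hd
  have hdist : ∀ x n, dist (g x n) (g x (n + 1)) ≤ d x n := by
    intro x n
    have h := hf (cubeIter op x n) (cubeIter op x n) (cubeIter op x n)
    have hkey : g x n - g x (n + 1) =
        -(((1 : ℝ) / 3) ^ (n + 1) •
          (f (cubeIter op x (n + 1)) - f (cubeIter op x n) - f (cubeIter op x n)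
            - f (cubeIter op x n))) := by
      simp only [hg, pow_succ]
      have : ((1 : ℝ) / 3) ^ n = ((1 : ℝ) / 3) ^ n * (1 / 3) * 3 := by ring
      rw [smul_sub, smul_sub, smul_sub]
      nth_rewrite 1 [this]
      rw [mul_smul]
      module
    rw [dist_eq_norm, hkey, norm_neg, norm_smul]
    have hnorm : ‖((1 : ℝ) / 3) ^ (n + 1)‖ = (1 / 3) * ((1 : ℝ) / 3) ^ n := by
      rw [norm_pow, Real.norm_eq_abs, abs_of_nonneg (by norm_num : (0:ℝ) ≤ 1 / 3)]
      ring
    have hfc : f (cubeIter op x (n + 1)) = f (op (cubeIter op x n) (cubeIter op x n)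
        (cubeIter op x n)) := rfl
    rw [hnorm, hd, mul_assoc]
    refine mul_le_mul_of_nonneg_left ?_ (by norm_num)
    refine mul_le_mul_of_nonneg_left ?_ (by positivity)
    rw [hfc]
    exact h
  have hdsum : ∀ x, Summable (d x) := fun x => (hconv x x x).mul_left _
  have hcauchy : ∀ x, CauchySeq (g x) := fun x =>
    cauchySeq_of_dist_le_of_summable (d x) (hdist x) (hdsum x)
  have hlim : ∀ x, ∃ a, Filter.Tendsto (g x) Filter.atTop (nhds a) := fun x =>
    cauchySeq_tendsto_of_complete (hcauchy x)
  choose T hT using hlim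
  refine ⟨T, ?_, ?_⟩
  · intro x
    have h1 : ∀ n, g (op x x x) n = (3 : ℝ) • g x (n + 1) := by
      intro n
      show ((1 : ℝ) / 3) ^ n • f (cubeIter op (op x x x) n)
        = (3 : ℝ) • (((1 : ℝ) / 3) ^ (n + 1) • f (cubeIter op x (n + 1)))
      rw [cubeIter_cube, smul_smul]
      congr 1
      rw [pow_succ]
      ring
    have h2 : Filter.Tendsto (fun n => g x (n + 1)) Filter.atTop (nhds (T x)) :=
      (hT x).comp (Filter.tendsto_add_atTop_nat 1)
    have h3 : Filter.Tendsto (g (op x x x)) Filter.atTop (nhds ((3 : ℝ) • T x)) :=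
      (h2.const_smul (3 : ℝ)).congr fun n => (h1 n).symm
    exact tendsto_nhds_unique (hT (op x x x)) h3
  · intro x
    have h0 : g x 0 = f x := by
      show ((1 : ℝ) / 3) ^ 0 • f (cubeIter op x 0) = f x
      simp [cubeIter]
    have := dist_le_tsum_of_dist_le_of_tendsto₀ (d x) (hdist x) (hdsum x) (hT x)
    rw [h0, dist_eq_norm] at this
    calc ‖f x - T x‖ ≤ ∑' n, d x n := this
      _ = (1 / 3) * ∑' n, ((1 : ℝ) / 3) ^ n * φ (cubeIter op x n) (cubeIter op x n)
          (cubeIter op x n) := tsum_mul_left
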